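/- Let A be an n×n SPD matrix, M an n×n matrix with M + Mᵀ − A SPD, and let G be any n×n symmetric positive semidefinite matrix. Then both the additive preconditioner B_add⁻¹ := M̄⁻¹ + G and the multiplicative preconditioner B_mult⁻¹ := M̄⁻¹ + (I − M⁻ᵀA) G (I − A M⁻¹) are symmetric positive definite, where M̄ = M (M + Mᵀ − A)⁻¹ Mᵀ. -/

import Mathlib

open Matrix

private lemma posDef_conj {n : ℕ} {N B : Matrix (Fin n) (Fin n) ℝ}
    (hN : N.PosDef) (hB : IsUnit B) : (Bᴴ * N * B).PosDef := by
  refine posDef_iff_dotProduct_mulVec.2 ⟨isHermitian_conjTranspose_mul_mul B hN.1, fun x hx => ?_⟩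
  have hinj : Function.Injective (B.mulVec) := mulVec_injective_iff_isUnit.2 hB
  have hx' : B *ᵥ x ≠ 0 := fun h => hx (hinj (by simpa using h))
  simpa only [star_mulVec, dotProduct_mulVec, vecMul_vecMul] using (posDef_iff_dotProduct_mulVec.1 hN).2 (x := B *ᵥ x) hx'

theorem stmt6 {n : ℕ}
    (A M G : Matrix (Fin n) (Fin n) ℝ) (hA : A.PosDef) (hM : IsUnit M)
    (hMA : (M + Mᵀ - A).PosDef) (hG : G.PosSemidef) :
    ((M * (M + Mᵀ - A)⁻¹ * Mᵀ)⁻¹ + G).PosDef ∧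
    ((M * (M + Mᵀ - A)⁻¹ * Mᵀ)⁻¹
      + (1 - (Mᵀ)⁻¹ * A) * G * (1 - A * M⁻¹)).PosDef := by
  have hMT : IsUnit Mᵀ := by
    rwa [Matrix.isUnit_iff_isUnit_det, Matrix.det_transpose, ← Matrix.isUnit_iff_isUnit_det]
  have hNi : (M + Mᵀ - A)⁻¹.PosDef := hMA.inv
  have hMbar : (M * (M + Mᵀ - A)⁻¹ * Mᵀ).PosDef := by
    have := posDef_conj hNi hMT
    rwa [conjTranspose_eq_transpose_of_trivial, transpose_transpose] at this
  have hMbarInv := hMbar.inv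
  constructor
  · exact hMbarInv.add_posSemidef hG
  · have hAs : Aᵀ = A := by
      rw [← conjTranspose_eq_transpose_of_trivial]; exact hA.1
    have key : (1 - (Mᵀ)⁻¹ * A) = (1 - A * M⁻¹)ᴴ := by
      rw [conjTranspose_eq_transpose_of_trivial, transpose_sub, transpose_one,
        transpose_mul, transpose_nonsing_inv, hAs]
    rw [key]
    exact hMbarInv.add_posSemidef (hG.conjTranspose_mul_mul_same (1 - A * M⁻¹))
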